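/- Let μ, μ′ be two Borel probability measures on a metric space Y, and let (ζ_n) be a sequence of countable Borel partitions of Y such that ζ_m(y) ⊆ ζ_n(y) whenever m ≥ n, and such that for μ-a.e. y the diameter of ζ_n(y) tends to 0. If the Kullback–Leibler divergences D_{ζ_n}(μ ∥ μ′) := ∑_{A ∈ ζ_n} −μ(A) log(μ′(A)/μ(A)) are bounded above uniformly in n, then μ is absolutely continuous with respect to μ′. -/

import Mathlib

open MeasureTheory Filter

/-- Pointwise lower bound: `log L * p - L * q ≤ p * log (p / q)`. -/
lemma kl_pointwise {p q L : ℝ} (hp : 0 ≤ p) (hq : 0 ≤ q) (hL : 1 ≤ L)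
    (h0 : q = 0 → p = 0) : Real.log L * p - L * q ≤ p * Real.log (p / q) := by
  have hL0 : 0 < L := lt_of_lt_of_le one_pos hL
  rcases eq_or_lt_of_le hq with hq0 | hq0
  · have hp0 : p = 0 := h0 hq0.symm
    simp [hp0, ← hq0]
  rcases eq_or_lt_of_le hp with hp0 | hp0
  · simp only [← hp0, mul_zero, zero_mul, zero_sub, zero_mul]
    nlinarith
  · have key : Real.log (L * q / p) ≤ L * q / p - 1 :=
      Real.log_le_sub_one_of_pos (by positivity)
    have hlog : Real.log (p / q) = Real.log L - Real.log (L * q / p) := by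
      rw [Real.log_div (by positivity) (ne_of_gt hq0),
        Real.log_div (by positivity) (ne_of_gt hp0), Real.log_mul (ne_of_gt hL0) (ne_of_gt hq0)]
      ring
    rw [hlog]
    have h2 : p * Real.log (L * q / p) ≤ L * q - p := by
      have := mul_le_mul_of_nonneg_left key hp
      calc p * Real.log (L * q / p) ≤ p * (L * q / p - 1) := this
        _ = L * q - p := by field_simp
    nlinarith

/-- Summing measures of disjoint sets over a sub-collection. -/
lemma hasSum_measure_toReal {Y ι : Type*} [MeasurableSpace Y] (ν : Measure Y)
    [IsFiniteMeasure ν] [Countable ι] (A : ι → Set Y)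
    (hm : ∀ i, MeasurableSet (A i)) (hd : Pairwise (Function.onFun Disjoint A)) (T : Set ι) :
    HasSum (fun i : T => (ν (A i)).toReal) ((ν (⋃ i : T, A i)).toReal) := by
  have hdu : ν (⋃ i : T, A (i : ι)) = ∑' i : T, ν (A i) :=
    measure_iUnion (hd.comp_of_injective Subtype.val_injective) (fun i => hm i)
  rw [hdu, ENNReal.tsum_toReal_eq (fun i => measure_ne_top ν _)]
  exact ENNReal.hasSum_toReal (hdu ▸ measure_ne_top ν _)


open scoped Classical in
/-- The Kullback–Leibler divergence `∑ᵢ −pᵢ log(qᵢ/pᵢ) = ∑ᵢ pᵢ log(pᵢ/qᵢ)` of two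
countable nonnegative families, valued in `EReal = [−∞, ∞]`, with the conventions
`log 0 = −∞` and `0·log(0/0) = 0·log ∞ = 0`: it equals `⊤` if some index carries
`pᵢ > 0 = qᵢ`, or if the (conventional) series fails to converge. -/
noncomputable def klDiv {ι : Type*} (p q : ι → ℝ) : EReal :=
  if (∀ i, q i = 0 → p i = 0) ∧ Summable (fun i => p i * Real.log (p i / q i)) then
    (((∑' i, p i * Real.log (p i / q i) : ℝ) : EReal))
  else ⊤

/-- Let `μ, μ'` be two Borel probability measures on a metric space `Y`,
and let `(ζₙ)` be a sequence of countable Borel partitions of `Y` (here `ζ n y` denotes the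
element of the `n`-th partition containing `y`) which are nested (`ζ m y ⊆ ζ n y` for
`m ≥ n`) and nicely shrinking with respect to `μ` (for `μ`-a.e. `y`, `diam (ζ n y) → 0`).
If the Kullback–Leibler divergences `D_{ζₙ}(μ ∥ μ') = ∑_{A ∈ ζₙ} −μ(A) log(μ'(A)/μ(A))`
are bounded above uniformly in `n`, then `μ ≪ μ'`. -/
theorem stmt_5 {Y : Type*} [MetricSpace Y] [MeasurableSpace Y] [BorelSpace Y]
    (μ μ' : Measure Y) [IsProbabilityMeasure μ] [IsProbabilityMeasure μ']
    (ζ : ℕ → Y → Set Y)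
    (hmem : ∀ n y, y ∈ ζ n y)
    (hpart : ∀ n y y', y' ∈ ζ n y → ζ n y' = ζ n y)
    (hmeas : ∀ n y, MeasurableSet (ζ n y))
    (hcount : ∀ n, (Set.range (ζ n)).Countable)
    (hnested : ∀ m n, n ≤ m → ∀ y, ζ m y ⊆ ζ n y)
    (hshrink : ∀ᵐ y ∂μ, Tendsto (fun n => EMetric.diam (ζ n y)) atTop (nhds 0))
    (C : ℝ)
    (hbdd : ∀ n, klDiv (fun A : Set.range (ζ n) => (μ A.1).toReal)
        (fun A : Set.range (ζ n) => (μ' A.1).toReal) ≤ (C : EReal)) :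
    μ ≪ μ' := by
  refine Measure.AbsolutelyContinuous.mk fun E hEm hE0 => ?_
  by_contra hE
  set ε := (μ E).toReal with hεdef
  have hε : 0 < ε := ENNReal.toReal_pos hE (measure_ne_top μ E)
  set M : ℝ := max 0 (2 * (C + 2) / ε) with hMdef
  have hM0 : 0 ≤ M := le_max_left _ _
  have hM2 : 2 * (C + 2) ≤ M * ε := by
    rcases le_max_iff.mp (le_refl M) with h | h
    · exact (div_le_iff₀ hε).mp (le_max_right _ _)
    · exact (div_le_iff₀ hε).mp (le_max_right _ _)
  set L : ℝ := Real.exp (M + 1) with hLdef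
  have hlogL : Real.log L = M + 1 := Real.log_exp _
  have hL1 : 1 ≤ L := Real.one_le_exp (by linarith)
  have hL0 : 0 < L := lt_of_lt_of_le one_pos hL1
  -- choose an open set U ⊇ E of small μ' measure
  obtain ⟨U, hEU, hUopen, hU⟩ := Set.exists_isOpen_lt_of_lt (μ := μ') E
    (ENNReal.ofReal (1 / L)) (by rw [hE0]; exact ENNReal.ofReal_pos.mpr (by positivity))
  set S : ℕ → Set Y := fun n => {y | ζ n y ⊆ U} with hSdef
  have hSU : ∀ n, S n ⊆ U := fun n y hy => hy (hmem n y)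
  -- a.e. point of E lies in some S n
  have hScup : ∀ᵐ y ∂μ, y ∈ E → y ∈ ⋃ n, S n := by
    filter_upwards [hshrink] with y hy hyE
    obtain ⟨r, hr0, hball⟩ := EMetric.isOpen_iff.mp hUopen y (hEU hyE)
    obtain ⟨n, hn⟩ := (hy.eventually (Iio_mem_nhds hr0)).exists
    exact Set.mem_iUnion.mpr ⟨n, fun z hz => hball (EMetric.mem_ball.mpr
      (lt_of_le_of_lt (EMetric.edist_le_diam_of_mem hz (hmem n y)) hn))⟩
  have hmono : Monotone S := fun n m h y hy => (hnested m n h y).trans hy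
  have hle : μ E ≤ ⨆ n, μ (S n) := by
    calc μ E ≤ μ (⋃ n, S n) := measure_mono_ae hScup
    _ = ⨆ n, μ (S n) := hmono.directed_le.measure_iUnion
  obtain ⟨n, hn⟩ : ∃ n, μ E / 2 < μ (S n) :=
    lt_iSup_iff.mp (lt_of_lt_of_le (ENNReal.half_lt_self hE (measure_ne_top μ E)) hle)
  have hP : ε / 2 ≤ (μ (S n)).toReal := by
    have h := ENNReal.toReal_mono (measure_ne_top μ _) hn.le
    rw [ENNReal.toReal_div] at h
    simpa using h
  -- extract the KL bound at this n
  set ι := ↥(Set.range (ζ n)) with hιdef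
  haveI : Countable ι := (hcount n).to_subtype
  set p : ι → ℝ := fun A => (μ (A : Set Y)).toReal with hpdef
  set q : ι → ℝ := fun A => (μ' (A : Set Y)).toReal with hqdef
  have hbn := hbdd n
  rw [klDiv] at hbn
  split_ifs at hbn with hcond
  swap
  · exact (EReal.coe_lt_top C).not_ge hbn
  obtain ⟨hq0, hfsum⟩ := hcond
  have hfC : (∑' A : ι, p A * Real.log (p A / q A)) ≤ C := EReal.coe_le_coe_iff.mp hbn
  -- disjointness and measurability of cells
  have hcell : ∀ A : ι, MeasurableSet (A : Set Y) := by
    rintro ⟨A, w, rfl⟩; exact hmeas n w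
  have hdisj : Pairwise (Function.onFun Disjoint (fun A : ι => (A : Set Y))) := by
    rintro ⟨A, a, rfl⟩ ⟨B, b, rfl⟩ hne
    refine Set.disjoint_left.mpr fun z hzA hzB =>
      hne (Subtype.ext ((hpart n a z hzA).symm.trans (hpart n b z hzB)))
  set T : Set ι := {A | (A : Set Y) ⊆ U} with hTdef
  have hSrep : S n = ⋃ (A : T), ((A : ι) : Set Y) := by
    ext y
    constructor
    · intro hy
      exact Set.mem_iUnion.mpr ⟨⟨⟨ζ n y, Set.mem_range_self y⟩, hy⟩, hmem n y⟩
    · intro hy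
      obtain ⟨⟨⟨A, w, rfl⟩, hAU⟩, hyA⟩ := Set.mem_iUnion.mp hy
      show ζ n y ⊆ U
      rw [hpart n w y hyA]
      exact hAU
  have hPsum : HasSum (fun A : T => p A) ((μ (S n)).toReal) := by
    rw [hSrep]
    exact hasSum_measure_toReal μ _ hcell hdisj T
  have hQsum : HasSum (fun A : T => q A) ((μ' (S n)).toReal) := by
    rw [hSrep]
    exact hasSum_measure_toReal μ' _ hcell hdisj T
  have hQcsum : HasSum (fun A : ↥Tᶜ => q A) ((μ' (⋃ A : ↥Tᶜ, ((A : ι) : Set Y))).toReal) :=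
    hasSum_measure_toReal μ' _ hcell hdisj Tᶜ
  set P : ℝ := (μ (S n)).toReal
  set Q : ℝ := (μ' (S n)).toReal
  set Qc : ℝ := (μ' (⋃ A : ↥Tᶜ, ((A : ι) : Set Y))).toReal
  set g : ι → ℝ := T.indicator (fun A => Real.log L * p A - L * q A)
    + Tᶜ.indicator (fun A => -(q A)) with hgdef
  have hgsum : HasSum g ((Real.log L * P - L * Q) + -Qc) := by
    refine HasSum.add ?_ ?_
    · exact hasSum_subtype_iff_indicator.mp ((hPsum.mul_left _).sub (hQsum.mul_left _))
    · exact hasSum_subtype_iff_indicator.mp hQcsum.neg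
  have hgle : ∀ A : ι, g A ≤ p A * Real.log (p A / q A) := by
    intro A
    by_cases hA : A ∈ T
    · have : g A = Real.log L * p A - L * q A := by
        simp [hgdef, Set.indicator_of_mem hA,
          Set.indicator_of_notMem (Set.notMem_compl_iff.mpr hA)]
      rw [this]
      exact kl_pointwise ENNReal.toReal_nonneg ENNReal.toReal_nonneg hL1 (hq0 A)
    · have : g A = -(q A) := by
        simp [hgdef, Set.indicator_of_notMem hA, Set.indicator_of_mem (Set.mem_compl hA)]
      rw [this]
      have := kl_pointwise (p := p A) (q := q A) ENNReal.toReal_nonneg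
        ENNReal.toReal_nonneg (le_refl 1) (hq0 A)
      simpa using this
  have hmain : (Real.log L * P - L * Q) + -Qc ≤ C := by
    rw [← hgsum.tsum_eq]
    exact le_trans (Summable.tsum_le_tsum hgle hgsum.summable hfsum) hfC
  -- numeric bounds
  have hQlt : Q < 1 / L :=
    ENNReal.toReal_lt_of_lt_ofReal (lt_of_le_of_lt (measure_mono (hSU n)) hU)
  have hQ0 : 0 ≤ Q := ENNReal.toReal_nonneg
  have hQc1 : Qc ≤ 1 := by
    have h1 : μ' (⋃ A : ↥Tᶜ, ((A : ι) : Set Y)) ≤ 1 := prob_le_one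
    have h2 := ENNReal.toReal_mono ENNReal.one_ne_top h1
    rwa [ENNReal.toReal_one] at h2
  have hLQ : L * Q ≤ 1 := by
    have := mul_le_mul_of_nonneg_left hQlt.le hL0.le
    rwa [mul_one_div, div_self (ne_of_gt hL0)] at this
  have hlogP : (M + 1) * (ε / 2) ≤ Real.log L * P := by
    rw [hlogL]
    exact mul_le_mul_of_nonneg_left hP (by linarith)
  nlinarith [hmain, hlogP, hM2, hε, hLQ, hQc1]
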